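/- The softmax map s ↦ (exp(s_j)/Σ_i exp(s_i))_{j=1}^n from ℝ^n to the probability simplex is 1-Lipschitz with respect to the Euclidean norm: ‖softmax(s) − softmax(t)‖₂ ≤ ‖s − t‖₂ for all s, t ∈ ℝ^n. -/

import Mathlib

noncomputable section

/-- The softmax map on ℝⁿ (with the Euclidean norm). -/
def softmax {n : ℕ} (s : EuclideanSpace ℝ (Fin n)) : EuclideanSpace ℝ (Fin n) :=
  WithLp.toLp 2 (fun j => Real.exp (s j) / ∑ i, Real.exp (s i))

/-- Weighted covariance bound: for a probability vector `a`,
`|Cov_a(u,v)| ≤ ‖u‖₂ ‖v‖₂`. -/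
lemma cov_bound {n : ℕ} (a u v : Fin n → ℝ) (ha0 : ∀ j, 0 ≤ a j) (ha1 : ∀ j, a j ≤ 1)
    (hsum : ∑ j, a j = 1) :
    |∑ j, u j * (a j * v j - a j * ∑ i, a i * v i)| ≤
      Real.sqrt (∑ j, u j ^ 2) * Real.sqrt (∑ j, v j ^ 2) := by
  set U := ∑ j, a j * u j with hU
  set V := ∑ j, a j * v j with hV
  set x : Fin n → ℝ := fun j => Real.sqrt (a j) * (u j - U) with hx
  set y : Fin n → ℝ := fun j => Real.sqrt (a j) * (v j - V) with hy
  have hkey : ∑ j, u j * (a j * v j - a j * V) = ∑ j, x j * y j := by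
    have h1 : ∀ j, x j * y j =
        a j * (u j * v j) - (a j * u j) * V - (a j * v j) * U + a j * (U * V) := by
      intro j
      have h := Real.mul_self_sqrt (ha0 j)
      have e : x j * y j = (Real.sqrt (a j) * Real.sqrt (a j)) * ((u j - U) * (v j - V)) := by
        simp only [hx, hy]; ring
      rw [e, h]; ring
    have h2 : ∀ j, u j * (a j * v j - a j * V) = a j * (u j * v j) - (a j * u j) * V := by
      intro j; ring
    simp_rw [h1, h2, Finset.sum_add_distrib, Finset.sum_sub_distrib, ← Finset.sum_mul]
    rw [hsum, ← hU, ← hV]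
    ring
  rw [hkey]
  have hcs : (∑ j, x j * y j) ^ 2 ≤ (∑ j, x j ^ 2) * ∑ j, y j ^ 2 :=
    Finset.sum_mul_sq_le_sq_mul_sq _ _ _
  have hvar : ∀ (w : Fin n → ℝ) (W : ℝ), W = ∑ j, a j * w j →
      ∑ j, (Real.sqrt (a j) * (w j - W)) ^ 2 ≤ ∑ j, w j ^ 2 := by
    intro w W hW
    have h1 : ∀ j, (Real.sqrt (a j) * (w j - W)) ^ 2
        = a j * w j ^ 2 - 2 * W * (a j * w j) + W ^ 2 * a j := by
      intro j
      have h := Real.mul_self_sqrt (ha0 j)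
      have e : (Real.sqrt (a j) * (w j - W)) ^ 2
          = (Real.sqrt (a j) * Real.sqrt (a j)) * (w j - W) ^ 2 := by ring
      rw [e, h]; ring
    simp_rw [h1, Finset.sum_add_distrib, Finset.sum_sub_distrib, ← Finset.mul_sum]
    rw [hsum, ← hW]
    have h2 : ∑ j, a j * w j ^ 2 ≤ ∑ j, w j ^ 2 :=
      Finset.sum_le_sum fun j _ => by nlinarith [ha0 j, ha1 j, sq_nonneg (w j)]
    nlinarith [sq_nonneg W]
  have hxu : ∑ j, x j ^ 2 ≤ ∑ j, u j ^ 2 := hvar u U hU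
  have hyv : ∑ j, y j ^ 2 ≤ ∑ j, v j ^ 2 := hvar v V hV
  have hx0 : (0:ℝ) ≤ ∑ j, x j ^ 2 := Finset.sum_nonneg fun j _ => sq_nonneg _
  have hy0 : (0:ℝ) ≤ ∑ j, y j ^ 2 := Finset.sum_nonneg fun j _ => sq_nonneg _
  have habs : |∑ j, x j * y j| ≤ Real.sqrt (∑ j, x j ^ 2) * Real.sqrt (∑ j, y j ^ 2) := by
    rw [← Real.sqrt_sq_eq_abs, ← Real.sqrt_mul hx0]
    exact Real.sqrt_le_sqrt hcs
  calc |∑ j, x j * y j| ≤ Real.sqrt (∑ j, x j ^ 2) * Real.sqrt (∑ j, y j ^ 2) := habs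
    _ ≤ Real.sqrt (∑ j, u j ^ 2) * Real.sqrt (∑ j, v j ^ 2) := by
        exact mul_le_mul (Real.sqrt_le_sqrt hxu) (Real.sqrt_le_sqrt hyv)
          (Real.sqrt_nonneg _) (Real.sqrt_nonneg _)

lemma div_aux (E S De vj : ℝ) (h : De ≠ 0) :
    E / De * vj - E / De * (S / De) = (E * vj * De - E * S) / De ^ 2 := by
  field_simp

/-- Softmax is 1-Lipschitz with respect to the Euclidean norm. -/
theorem softmax_lipschitz {n : ℕ} (s t : EuclideanSpace ℝ (Fin n)) :
    ‖softmax s - softmax t‖ ≤ ‖s - t‖ := by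
  rcases Nat.eq_zero_or_pos n with hn | hn
  · subst hn
    have h1 : softmax s - softmax t = 0 := Subsingleton.elim _ _
    rw [h1, norm_zero]
    exact norm_nonneg _
  haveI : Nonempty (Fin n) := ⟨⟨0, hn⟩⟩
  -- notation
  set v : Fin n → ℝ := fun j => s j - t j with hv
  set c : ℝ → Fin n → ℝ := fun θ j => t j + θ * v j with hc
  set D : ℝ → ℝ := fun θ => ∑ i, Real.exp (c θ i) with hD
  have hDpos : ∀ θ, 0 < D θ := fun θ =>
    Finset.sum_pos (fun i _ => Real.exp_pos _) Finset.univ_nonempty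
  set a : ℝ → Fin n → ℝ := fun θ j => Real.exp (c θ j) / D θ with ha
  have ha0 : ∀ θ j, 0 ≤ a θ j := fun θ j =>
    div_nonneg (Real.exp_pos _).le (hDpos θ).le
  have ha1 : ∀ θ j, a θ j ≤ 1 := by
    intro θ j
    rw [div_le_one (hDpos θ)]
    exact Finset.single_le_sum (f := fun i => Real.exp (c θ i))
      (fun i _ => (Real.exp_pos _).le) (Finset.mem_univ j)
  have hasum : ∀ θ, ∑ j, a θ j = 1 := by
    intro θ
    simp only [ha]
    rw [← Finset.sum_div, div_self (hDpos θ).ne']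
  set u : Fin n → ℝ := fun j => softmax s j - softmax t j with hu
  set φ : ℝ → ℝ := fun θ => ∑ j, u j * a θ j with hφ
  -- derivatives
  have hcd : ∀ θ j, HasDerivAt (fun θ => c θ j) (v j) θ := by
    intro θ j
    simpa [hc] using ((hasDerivAt_id θ).mul_const (v j)).const_add (t j)
  have hed : ∀ θ j, HasDerivAt (fun θ => Real.exp (c θ j)) (Real.exp (c θ j) * v j) θ :=
    fun θ j => (hcd θ j).exp
  have hDd : ∀ θ, HasDerivAt D (∑ i, Real.exp (c θ i) * v i) θ := by
    intro θ
    exact HasDerivAt.fun_sum fun i _ => hed θ i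
  have had : ∀ θ j, HasDerivAt (fun θ => a θ j)
      (a θ j * v j - a θ j * ∑ i, a θ i * v i) θ := by
    intro θ j
    have h := (hed θ j).fun_div (hDd θ) (hDpos θ).ne'
    refine h.congr_deriv (Eq.symm ?_)
    have hS : ∑ i, a θ i * v i = (∑ i, Real.exp (c θ i) * v i) / D θ := by
      rw [Finset.sum_div]
      exact Finset.sum_congr rfl fun i _ => by simp only [ha]; ring
    rw [hS]
    show a θ j * v j - a θ j * _ = _
    simp only [ha]
    exact div_aux _ _ _ _ (hDpos θ).ne' 
  have hφd : ∀ θ, HasDerivAt φ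
      (∑ j, u j * (a θ j * v j - a θ j * ∑ i, a θ i * v i)) θ := by
    intro θ
    exact HasDerivAt.fun_sum fun j _ => (had θ j).const_mul (u j)
  -- MVT
  have h01 : (0:ℝ) < 1 := one_pos
  obtain ⟨θ, _, hθ⟩ := exists_hasDerivAt_eq_slope φ
    (fun θ => ∑ j, u j * (a θ j * v j - a θ j * ∑ i, a θ i * v i)) h01
    (fun x _ => (hφd x).continuousAt.continuousWithinAt)
    (fun x _ => hφd x)
  -- endpoint values
  have hc1 : ∀ j, c 1 j = s j := by intro j; simp [hc, hv]
  have hc0 : ∀ j, c 0 j = t j := by intro j; simp [hc]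
  have ha1s : ∀ j, a 1 j = softmax s j := by
    intro j; simp only [ha, hD, softmax, WithLp.ofLp_toLp]
    congr 1
    · rw [hc1]
    · exact Finset.sum_congr rfl fun i _ => by rw [hc1]
  have ha0t : ∀ j, a 0 j = softmax t j := by
    intro j; simp only [ha, hD, softmax, WithLp.ofLp_toLp]
    congr 1
    · rw [hc0]
    · exact Finset.sum_congr rfl fun i _ => by rw [hc0]
  have hslope : φ 1 - φ 0 = ∑ j, u j ^ 2 := by
    simp only [hφ]
    rw [← Finset.sum_sub_distrib]
    exact Finset.sum_congr rfl fun j _ => by rw [ha1s, ha0t]; simp only [hu]; ring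
  -- norms
  have hnormu : ‖softmax s - softmax t‖ = Real.sqrt (∑ j, u j ^ 2) := by
    rw [EuclideanSpace.norm_eq]
    congr 1
    exact Finset.sum_congr rfl fun j _ => by
      rw [Real.norm_eq_abs, sq_abs]
      simp [hu, PiLp.sub_apply]
  have hnormv : ‖s - t‖ = Real.sqrt (∑ j, v j ^ 2) := by
    rw [EuclideanSpace.norm_eq]
    congr 1
    exact Finset.sum_congr rfl fun j _ => by
      rw [Real.norm_eq_abs, sq_abs]
      simp [hv, PiLp.sub_apply]
  rw [hnormu, hnormv]
  set A := Real.sqrt (∑ j, u j ^ 2) with hA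
  set B := Real.sqrt (∑ j, v j ^ 2) with hB
  have hA0 : 0 ≤ A := Real.sqrt_nonneg _
  have hB0 : 0 ≤ B := Real.sqrt_nonneg _
  have hA2 : A ^ 2 = ∑ j, u j ^ 2 :=
    Real.sq_sqrt (Finset.sum_nonneg fun j _ => sq_nonneg _)
  have hbound : A ^ 2 ≤ A * B := by
    rw [hA2, ← hslope]
    have h1 : φ 1 - φ 0 = ∑ j, u j * (a θ j * v j - a θ j * ∑ i, a θ i * v i) := by
      rw [hθ]; ring
    rw [h1]
    calc ∑ j, u j * (a θ j * v j - a θ j * ∑ i, a θ i * v i)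
        ≤ |∑ j, u j * (a θ j * v j - a θ j * ∑ i, a θ i * v i)| := le_abs_self _
      _ ≤ A * B := cov_bound (a θ) u v (ha0 θ) (ha1 θ) (hasum θ)
  rcases eq_or_lt_of_le hA0 with h | h
  · rw [← h]; exact hB0
  · exact le_of_mul_le_mul_left (by nlinarith) h

end
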